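/- arXiv:2112.04164 — 2 statements merged into one kernel-verified Lean document; each statement's English description precedes it below -/
import Mathlib

section
/- Let I, A, B, I', A', B' be (possibly non-unital) C*-algebras, and let ι : I → A, q : A → B, ι' : I' → A', q' : A' → B' be *-homomorphisms forming the rows of a commutative diagram, with vertical *-homomorphisms φ_I : I → I', φ_A : A → A', φ_B : B → B' (so φ_A ∘ ι = ι' ∘ φ_I and φ_B ∘ q = q' ∘ φ_A). Assume: (i) ι is injective and its range is a closed two-sided ideal of A; (ii) the lower row is exact, i.e. ι' is injective, the range of ι' equals the kernel of q', and q' is surjective; (iii) φ_I, φ_A, φ_B are injective; and (iv) φ_I is non-degenerate, i.e. the closed linear span of {φ_I(x)·y : x ∈ I, y ∈ I'} is all of I'. Then the kernel of q is contained in the range of ι. -/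
set_option maxHeartbeats 1000000

open Unitization in
/-- Local approximate units: for finitely many elements of a non-unital C*-algebra there is a
contraction `e` with `‖x i - e * x i‖ ≤ δ`. -/
lemma exists_local_unit {J : Type*} [NonUnitalCStarAlgebra J] {n : ℕ} (x : Fin n → J)
    {δ : ℝ} (hδ : 0 < δ) :
    ∃ e : J, ‖e‖ ≤ 1 ∧ ∀ i, ‖x i - e * x i‖ ≤ δ := by
  letI : PartialOrder (Unitization ℂ J) := CStarAlgebra.spectralOrder _
  letI : StarOrderedRing (Unitization ℂ J) := CStarAlgebra.spectralOrderedRing _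
  set η : ℝ := δ ^ 2 with hη
  have hη0 : 0 < η := by positivity
  set h : J := ∑ i, x i * star (x i) with hh
  set f : ℝ → ℝ := fun t => max t 0 / (max t 0 + η) with hf
  have hden : ∀ t : ℝ, 0 < max t 0 + η := fun t =>
    add_pos_of_nonneg_of_pos (le_max_right t 0) hη0
  have hf0 : f 0 = 0 := by simp [hf]
  have hfc : Continuous f := by
    have hm : Continuous fun t : ℝ => max t 0 := continuous_id.max continuous_const
    exact hm.div (hm.add continuous_const) fun t => (hden t).ne'
  have hf_nonneg : ∀ t, 0 ≤ f t := fun t =>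
    div_nonneg (le_max_right t 0) (hden t).le
  have hf_le_one : ∀ t, f t ≤ 1 := fun t =>
    (div_le_one (hden t)).mpr (le_add_of_nonneg_right hη0.le)
  -- the sum `h` is selfadjoint, and nonneg in the unitization
  have hHsum : (h : Unitization ℂ J) = ∑ i, (x i : Unitization ℂ J) * star (x i : Unitization ℂ J) := by
    rw [hh]
    calc ((∑ i, x i * star (x i) : J) : Unitization ℂ J)
        = Unitization.inrNonUnitalStarAlgHom ℂ J (∑ i, x i * star (x i)) := rfl
      _ = ∑ i, Unitization.inrNonUnitalStarAlgHom ℂ J (x i * star (x i)) :=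
          map_sum (Unitization.inrNonUnitalStarAlgHom ℂ J) _ Finset.univ
      _ = ∑ i, (x i : Unitization ℂ J) * star (x i : Unitization ℂ J) := by
          refine Finset.sum_congr rfl fun i _ => ?_
          simp [Unitization.inrNonUnitalStarAlgHom_apply, Unitization.inr_mul,
            Unitization.inr_star]
  have hH_nonneg : (0 : Unitization ℂ J) ≤ (h : Unitization ℂ J) := by
    rw [hHsum]
    exact Finset.sum_nonneg fun i _ => mul_star_self_nonneg _
  have hH_sa : IsSelfAdjoint (h : Unitization ℂ J) := .of_nonneg hH_nonneg
  set e : J := cfcₙ f h with he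
  have hE : (e : Unitization ℂ J) = cfc f (h : Unitization ℂ J) :=
    Unitization.real_cfcₙ_eq_cfc_inr h f hf0
  have hE_nonneg : (0 : Unitization ℂ J) ≤ (e : Unitization ℂ J) := by
    rw [hE]; exact cfc_nonneg fun t _ => hf_nonneg t
  have he_norm : ‖e‖ ≤ 1 := by
    rw [he]
    refine norm_cfcₙ_le fun t _ => ?_
    rw [Real.norm_eq_abs, abs_of_nonneg (hf_nonneg t)]
    exact hf_le_one t
  have hE_norm : ‖(e : Unitization ℂ J)‖ ≤ 1 := by rwa [Unitization.norm_inr]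
  have hE_le_one : (e : Unitization ℂ J) ≤ 1 :=
    (CStarAlgebra.mem_Icc_iff_norm_le_one.mpr ⟨hE_nonneg, hE_norm⟩).2
  refine ⟨e, he_norm, fun i => ?_⟩
  -- the function g with g^2 = 1 - f
  set g : ℝ → ℝ := fun t => Real.sqrt (1 - f t) with hg
  have hgc : Continuous g := Real.continuous_sqrt.comp (continuous_const.sub hfc)
  have hgg : ∀ t, g t * g t = 1 - f t := fun t =>
    Real.mul_self_sqrt (by linarith [hf_le_one t])
  set G : Unitization ℂ J := cfc g (h : Unitization ℂ J) with hG
  have hG_sa : IsSelfAdjoint G := by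
    rw [hG]; exact cfc_predicate _ _
  set Z : Unitization ℂ J := (x i : Unitization ℂ J) with hZ
  -- 1 - E = G * G
  have h1E : 1 - (e : Unitization ℂ J) = G * G := by
    rw [hE, hG, ← cfc_mul g g _ hgc.continuousOn hgc.continuousOn]
    have h' : (fun t => g t * g t) = fun t : ℝ => 1 - f t := funext hgg
    rw [h', cfc_sub (fun _ : ℝ => (1 : ℝ)) f _ continuousOn_const hfc.continuousOn,
      cfc_const_one ℝ _]
  -- key conjugation estimate
  have hZZH : Z * star Z ≤ (h : Unitization ℂ J) := by
    rw [hHsum, hZ]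
    exact Finset.single_le_sum (f := fun j => (x j : Unitization ℂ J) * star (x j : Unitization ℂ J))
      (fun j _ => mul_star_self_nonneg _) (Finset.mem_univ i)
  have hGHG : G * (h : Unitization ℂ J) * G = cfc (fun t => g t * t * g t) (h : Unitization ℂ J) := by
    symm
    rw [cfc_mul (fun t => g t * t) g _ ((hgc.mul continuous_id).continuousOn) hgc.continuousOn,
      cfc_mul g (fun t : ℝ => t) _ hgc.continuousOn (continuous_id.continuousOn),
      cfc_id' ℝ (h : Unitization ℂ J), hG]
  have hGHG_norm : ‖G * (h : Unitization ℂ J) * G‖ ≤ η := by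
    rw [hGHG]
    refine norm_cfc_le hη0.le fun t ht => ?_
    have ht0 : 0 ≤ t := spectrum_nonneg_of_nonneg hH_nonneg ht
    have : g t * t * g t = t * (1 - f t) := by rw [mul_comm (g t) t, mul_assoc, hgg]
    rw [Real.norm_eq_abs, this]
    have hft : 1 - f t = η / (t + η) := by
      rw [hf]
      simp only [max_eq_left ht0]
      field_simp
      ring
    rw [hft, abs_of_nonneg (by positivity)]
    calc t * (η / (t + η)) = η * (t / (t + η)) := by ring
      _ ≤ η * 1 := by
          refine mul_le_mul_of_nonneg_left ?_ hη0.le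
          rw [div_le_one (by positivity)]; linarith
      _ = η := mul_one η
  have hkey : ‖star Z * (1 - (e : Unitization ℂ J)) * Z‖ ≤ δ ^ 2 := by
    rw [h1E]
    have h1 : star Z * (G * G) * Z = star (G * Z) * (G * Z) := by
      rw [star_mul, hG_sa.star_eq]; noncomm_ring
    rw [h1, CStarRing.norm_star_mul_self]
    have h2 : ‖G * Z‖ * ‖G * Z‖ = ‖(G * Z) * star (G * Z)‖ := by
      rw [CStarRing.norm_self_mul_star]
    rw [h2]
    have h3 : (G * Z) * star (G * Z) = G * (Z * star Z) * G := by
      rw [star_mul, hG_sa.star_eq]; noncomm_ring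
    rw [h3]
    have h4 : G * (Z * star Z) * G ≤ G * (h : Unitization ℂ J) * G := by
      have := star_left_conjugate_le_conjugate hZZH G
      rwa [hG_sa.star_eq] at this
    have h5 : (0 : Unitization ℂ J) ≤ G * (Z * star Z) * G := by
      have := star_left_conjugate_nonneg (mul_star_self_nonneg Z) G
      rwa [hG_sa.star_eq] at this
    calc ‖G * (Z * star Z) * G‖ ≤ ‖G * (h : Unitization ℂ J) * G‖ :=
          CStarAlgebra.norm_le_norm_of_nonneg_of_le h5 h4
      _ ≤ η := hGHG_norm
      _ = δ ^ 2 := hη.symm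
  have := CStarAlgebra.norm_sub_mul_self_le (A := Unitization ℂ J) Z hE_nonneg
    ⟨le_refl _, hE_le_one⟩ hδ.le hkey
  rwa [hZ, ← Unitization.inr_mul ℂ, ← Unitization.inr_sub ℂ, Unitization.norm_inr] at this



/-- **Lemma 3.1** (folklore). Given a commutative diagram of C*-algebras and
*-homomorphisms whose rows are `0 → I → A → B → 0` and `0 → I' → A' → B' → 0`,
where `ι : I → A` is injective with closed two-sided ideal range, the lower row is
exact, the vertical maps `φ_I, φ_A, φ_B` are injective, and `φ_I` is non-degenerate
(the closed linear span of `{φ_I(x) * y}` is all of `I'`), then `ker q ⊆ range ι`. -/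
theorem ker_subset_range_of_nondegenerate_embedding_into_exact_row
    {I A B I' A' B' : Type*}
    [NonUnitalCStarAlgebra I] [NonUnitalCStarAlgebra A] [NonUnitalCStarAlgebra B]
    [NonUnitalCStarAlgebra I'] [NonUnitalCStarAlgebra A'] [NonUnitalCStarAlgebra B']
    (ι : I →⋆ₙₐ[ℂ] A) (q : A →⋆ₙₐ[ℂ] B)
    (ι' : I' →⋆ₙₐ[ℂ] A') (q' : A' →⋆ₙₐ[ℂ] B')
    (φI : I →⋆ₙₐ[ℂ] I') (φA : A →⋆ₙₐ[ℂ] A') (φB : B →⋆ₙₐ[ℂ] B')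
    -- commutativity of the diagram
    (hcomm₁ : ∀ x : I, φA (ι x) = ι' (φI x))
    (hcomm₂ : ∀ a : A, φB (q a) = q' (φA a))
    -- (i) ι is injective and its range is a closed two-sided ideal of A
    (hι_inj : Function.Injective ι)
    (hι_closed : IsClosed (Set.range ι))
    (hι_ideal : ∀ x ∈ Set.range ι, ∀ a : A,
      a * x ∈ Set.range ι ∧ x * a ∈ Set.range ι)
    -- (ii) the lower row is exact
    (hι'_inj : Function.Injective ι')
    (hexact' : Set.range ι' = {a : A' | q' a = 0})
    (hq'_surj : Function.Surjective q')
    -- (iii) the vertical maps are injective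
    (hφI_inj : Function.Injective φI)
    (hφA_inj : Function.Injective φA)
    (hφB_inj : Function.Injective φB)
    -- (iv) φ_I is non-degenerate
    (hnondeg : closure (Submodule.span ℂ
      {z : I' | ∃ (x : I) (y : I'), z = φI x * y} : Set I') = Set.univ) :
    ∀ a : A, q a = 0 → a ∈ Set.range ι := by
  intro a ha
  -- the image of `a` in `A'` is killed by `q'`, hence comes from `I'`
  have hq'a : q' (φA a) = 0 := by rw [← hcomm₂, ha, map_zero]
  obtain ⟨c, hc⟩ : φA a ∈ Set.range ι' := by rw [hexact']; exact hq'a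
  -- key multiplication fact coming from `range ι` being an ideal
  have hmul : ∀ x : I, ∃ w : I, ι w = ι x * a ∧ φI w = φI x * c := by
    intro x
    obtain ⟨w, hw⟩ := (hι_ideal (ι x) ⟨x, rfl⟩ a).2
    refine ⟨w, hw, hι'_inj ?_⟩
    calc ι' (φI w) = φA (ι w) := (hcomm₁ w).symm
      _ = φA (ι x * a) := by rw [hw]
      _ = φA (ι x) * φA a := map_mul _ _ _
      _ = ι' (φI x) * ι' c := by rw [hcomm₁, hc]
      _ = ι' (φI x * c) := (map_mul _ _ _).symm
  -- `c` is approximated by elements of `range φI`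
  have happrox : ∀ ε : ℝ, 0 < ε → ∃ w : I, ‖c - φI w‖ < ε := by
    intro ε hε
    have hcm : c ∈ closure (Submodule.span ℂ
        {z : I' | ∃ (x : I) (y : I'), z = φI x * y} : Set I') := by
      rw [hnondeg]; trivial
    rw [Metric.mem_closure_iff] at hcm
    obtain ⟨s, hs_mem, hs⟩ := hcm (ε/3) (by positivity)
    rw [dist_eq_norm] at hs
    obtain ⟨m, fc, gv, hsum⟩ := Submodule.mem_span_set'.mp hs_mem
    choose xs ys hxy using fun i : Fin m => (gv i).2
    set M : ℝ := ∑ i, ‖fc i‖ * ‖ys i‖ with hM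
    have hM0 : 0 ≤ M := Finset.sum_nonneg fun i _ => by positivity
    set d : ℝ := (ε/3)/(M+1) with hd
    have hd0 : 0 < d := by positivity
    obtain ⟨e, he_norm, he⟩ := exists_local_unit xs hd0
    obtain ⟨w, -, hw2⟩ := hmul e
    refine ⟨w, ?_⟩
    rw [hw2]
    have key2 : ‖s - φI e * s‖ ≤ ε/3 := by
      have hrepr : s - φI e * s = ∑ i, fc i • (φI (xs i - e * xs i) * ys i) := by
        rw [← hsum, Finset.mul_sum, ← Finset.sum_sub_distrib]
        refine Finset.sum_congr rfl fun i _ => ?_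
        rw [mul_smul_comm, ← smul_sub]
        congr 1
        rw [hxy i, map_sub, map_mul, sub_mul, mul_assoc]
      rw [hrepr]
      calc ‖∑ i, fc i • (φI (xs i - e * xs i) * ys i)‖
          ≤ ∑ i, ‖fc i • (φI (xs i - e * xs i) * ys i)‖ := norm_sum_le _ _
        _ ≤ ∑ i, ‖fc i‖ * (d * ‖ys i‖) := by
            refine Finset.sum_le_sum fun i _ => ?_
            rw [norm_smul]
            refine mul_le_mul_of_nonneg_left ?_ (norm_nonneg _)
            calc ‖φI (xs i - e * xs i) * ys i‖
                ≤ ‖φI (xs i - e * xs i)‖ * ‖ys i‖ := norm_mul_le _ _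
              _ ≤ d * ‖ys i‖ := by
                  refine mul_le_mul_of_nonneg_right ?_ (norm_nonneg _)
                  rw [NonUnitalStarAlgHom.norm_map φI hφI_inj]
                  exact he i
        _ = d * M := by
            rw [hM, Finset.mul_sum]
            exact Finset.sum_congr rfl fun i _ => by ring
        _ ≤ ε/3 := by
            rw [hd, show (ε/3)/(M+1) * M = M / (M+1) * (ε/3) by ring]
            calc M / (M + 1) * (ε/3) ≤ 1 * (ε/3) := by
                  refine mul_le_mul_of_nonneg_right ?_ (by positivity)
                  rw [div_le_one (by positivity)]; linarith
              _ = ε/3 := one_mul _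
    have hφIe : ‖φI e‖ ≤ 1 := by
      rw [NonUnitalStarAlgHom.norm_map φI hφI_inj]; exact he_norm
    have hsplit : c - φI e * c = (c - s) + (s - φI e * s) + φI e * (s - c) := by
      rw [mul_sub]; abel
    calc ‖c - φI e * c‖
        = ‖(c - s) + (s - φI e * s) + φI e * (s - c)‖ := by rw [hsplit]
      _ ≤ ‖c - s‖ + ‖s - φI e * s‖ + ‖φI e * (s - c)‖ := norm_add₃_le
      _ ≤ ‖c - s‖ + ‖s - φI e * s‖ + ‖φI e‖ * ‖s - c‖ := by
          gcongr; exact norm_mul_le _ _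
      _ < ε := by
          have h3 : ‖s - c‖ < ε/3 := by rwa [norm_sub_rev]
          have h4 : ‖φI e‖ * ‖s - c‖ ≤ 1 * ‖s - c‖ :=
            mul_le_mul_of_nonneg_right hφIe (norm_nonneg _)
          rw [one_mul] at h4
          linarith
  -- conclude: `a` lies in the closure of `range ι`, which is closed
  have hcl : a ∈ closure (Set.range ι) := by
    rw [Metric.mem_closure_iff]
    intro ε hε
    obtain ⟨w, hw⟩ := happrox ε hε
    refine ⟨ι w, ⟨w, rfl⟩, ?_⟩
    rw [dist_eq_norm, ← NonUnitalStarAlgHom.norm_map φA hφA_inj, map_sub, hcomm₁, ← hc,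
      ← map_sub, NonUnitalStarAlgHom.norm_map ι' hι'_inj]
    exact hw
  rwa [hι_closed.closure_eq] at hcl
end

section
/- Let I, A, B, I', A', B' be (possibly non-unital) C*-algebras, and let ι : I → A, q : A → B, ι' : I' → A', q' : A' → B' be *-homomorphisms forming the rows of a commutative diagram, with vertical *-homomorphisms φ_I : I → I', φ_A : A → A', φ_B : B → B' (so φ_A ∘ ι = ι' ∘ φ_I and φ_B ∘ q = q' ∘ φ_A). Assume: (i) ι is injective, its range is a closed two-sided ideal of A, q is surjective, and q ∘ ι = 0; (ii) the lower row is exact, i.e. ι' is injective, the range of ι' equals the kernel of q', and q' is surjective; (iii) φ_I, φ_A, φ_B are injective; and (iv) φ_I is non-degenerate, i.e. the closed linear span of {φ_I(x)·y : x ∈ I, y ∈ I'} is all of I'. Then the upper row 0 → I → A → B → 0 is exact: ι is injective, the range of ι equals the kernel of q, and q is surjective. -/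
open Unitization

private lemma aux_starOrdered (J : Type*) [NonUnitalCStarAlgebra J] :
    letI : PartialOrder (Unitization ℂ J) := CStarAlgebra.spectralOrder _
    letI : PartialOrder J :=
      PartialOrder.lift (fun x : J ↦ (x : Unitization ℂ J)) inr_injective
    StarOrderedRing J := by
  letI : PartialOrder (Unitization ℂ J) := CStarAlgebra.spectralOrder _
  letI : StarOrderedRing (Unitization ℂ J) := CStarAlgebra.spectralOrderedRing _
  letI : PartialOrder J :=
    PartialOrder.lift (fun x : J ↦ (x : Unitization ℂ J)) inr_injective
  refine StarOrderedRing.of_le_iff fun x y ↦ ⟨fun h ↦ ?_, fun ⟨s, hs⟩ ↦ ?_⟩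
  · have h' : (x : Unitization ℂ J) ≤ y := h
    obtain ⟨h1, h2⟩ := h'
    rw [← inr_sub ℂ y x] at h1 h2
    have hsa : IsSelfAdjoint (y - x) := by
      have := h1.star_eq
      rw [← inr_star] at this
      exact inr_injective (R := ℂ) this
    have hqr : QuasispectrumRestricts (y - x) ContinuousMap.realToNNReal := by
      rw [QuasispectrumRestricts.nnreal_iff]
      intro t ht
      rw [Unitization.quasispectrum_eq_spectrum_inr' ℝ ℂ] at ht
      rw [QuasispectrumRestricts.nnreal_iff] at h2
      exact h2 t (spectrum_subset_quasispectrum ℝ _ ht)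
    obtain ⟨s, hs₁, -, hs₂⟩ :=
      CFC.exists_sqrt_of_isSelfAdjoint_of_quasispectrumRestricts hsa hqr
    exact ⟨s, by rw [hs₁.star_eq, hs₂]; abel⟩
  · show (x : Unitization ℂ J) ≤ y
    rw [StarOrderedRing.le_iff]
    refine ⟨star (s : Unitization ℂ J) * s, AddSubmonoid.subset_closure ⟨s, rfl⟩, ?_⟩
    rw [hs, inr_add, inr_mul, inr_star]

private lemma aux_exists_approx {J : Type*} [NonUnitalCStarAlgebra J]
    {n : ℕ} (d : Fin n → J) {δ : ℝ} (hδ : 0 < δ) :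
    ∃ e : J, ‖e‖ ≤ 1 ∧ ∀ i, ‖d i - e * d i‖ < δ := by
  letI : PartialOrder (Unitization ℂ J) := CStarAlgebra.spectralOrder _
  letI : PartialOrder J :=
    PartialOrder.lift (fun x : J ↦ (x : Unitization ℂ J)) inr_injective
  letI : StarOrderedRing J := aux_starOrdered J
  have hau := CStarAlgebra.increasingApproximateUnit J
  haveI := hau.neBot
  have h1 : ∀ᶠ x in CStarAlgebra.approximateUnit J, ‖x‖ ≤ 1 := hau.eventually_norm
  have h2 : ∀ᶠ x in CStarAlgebra.approximateUnit J, ∀ i, ‖d i - x * d i‖ < δ := by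
    rw [Filter.eventually_all]
    intro i
    have h3 := Metric.tendsto_nhds.mp (hau.tendsto_mul_right (d i)) δ hδ
    filter_upwards [h3] with x hx
    rw [dist_eq_norm, ← norm_neg] at hx
    simpa [neg_sub] using hx
  obtain ⟨e, he1, he2⟩ := (h1.and h2).exists
  exact ⟨e, he1, he2⟩

private lemma aux_dense {I I' : Type*} [NonUnitalCStarAlgebra I] [NonUnitalCStarAlgebra I']
    (φI : I →⋆ₙₐ[ℂ] I') (hφI_inj : Function.Injective φI)
    (hnondeg : closure (Submodule.span ℂ
      {z : I' | ∃ (x : I) (y : I'), z = φI x * y} : Set I') = Set.univ)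
    (y : I') {ε : ℝ} (hε : 0 < ε) :
    ∃ x : I, ‖φI x‖ ≤ 1 ∧ ‖y - φI x * y‖ < ε := by
  have hspan : ∀ w ∈ Submodule.span ℂ {z : I' | ∃ (x : I) (y : I'), z = φI x * y},
      ∀ δ : ℝ, 0 < δ → ∃ e : I, ‖φI e‖ ≤ 1 ∧ ‖w - φI e * w‖ < δ := by
    intro w hw δ hδ
    obtain ⟨n, c, g, hg⟩ := Submodule.mem_span_set'.mp hw
    choose xs zs hxz using fun i : Fin n => (g i).2
    set K := ∑ i, ‖c i‖ * ‖zs i‖ with hK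
    have hK0 : 0 ≤ K := Finset.sum_nonneg fun i _ => by positivity
    have hδ' : 0 < δ / (K + 1) := by positivity
    obtain ⟨e, he1, he2⟩ := aux_exists_approx xs hδ'
    have hnorm : ‖φI e‖ ≤ 1 := by
      rw [NonUnitalStarAlgHom.norm_map φI hφI_inj]; exact he1
    refine ⟨e, hnorm, ?_⟩
    have hw' : w - φI e * w = ∑ i, c i • (φI (xs i - e * xs i) * zs i) := by
      rw [← hg, Finset.mul_sum, ← Finset.sum_sub_distrib]
      refine Finset.sum_congr rfl fun i _ => ?_
      rw [mul_smul_comm, ← smul_sub, hxz i, map_sub, map_mul, sub_mul, mul_assoc]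
    rw [hw']
    calc ‖∑ i, c i • (φI (xs i - e * xs i) * zs i)‖
        ≤ ∑ i, ‖c i • (φI (xs i - e * xs i) * zs i)‖ := norm_sum_le _ _
      _ ≤ ∑ i, ‖c i‖ * (δ / (K + 1) * ‖zs i‖) := by
          refine Finset.sum_le_sum fun i _ => ?_
          rw [norm_smul]
          refine mul_le_mul_of_nonneg_left ?_ (norm_nonneg _)
          refine (norm_mul_le _ _).trans ?_
          refine mul_le_mul_of_nonneg_right ?_ (norm_nonneg _)
          rw [NonUnitalStarAlgHom.norm_map φI hφI_inj]
          exact (he2 i).le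
      _ = δ / (K + 1) * K := by
          rw [hK, Finset.mul_sum]
          exact Finset.sum_congr rfl fun i _ => by ring
      _ < δ / (K + 1) * (K + 1) := by
          exact mul_lt_mul_of_pos_left (by linarith) hδ'
      _ = δ := div_mul_cancel₀ δ (by positivity)
  have hy : y ∈ closure (Submodule.span ℂ
      {z : I' | ∃ (x : I) (y : I'), z = φI x * y} : Set I') := by
    rw [hnondeg]; trivial
  rw [Metric.mem_closure_iff] at hy
  obtain ⟨w, hw, hdist⟩ := hy (ε / 3) (by positivity)
  obtain ⟨e, he1, he2⟩ := hspan w hw (ε / 3) (by positivity)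
  refine ⟨e, he1, ?_⟩
  have h1 : ‖y - w‖ < ε / 3 := by rwa [dist_eq_norm] at hdist
  have h3 : ‖φI e * w - φI e * y‖ < ε / 3 := by
    rw [← mul_sub]
    calc ‖φI e * (w - y)‖ ≤ ‖φI e‖ * ‖w - y‖ := norm_mul_le _ _
      _ ≤ 1 * ‖w - y‖ := mul_le_mul_of_nonneg_right he1 (norm_nonneg _)
      _ = ‖w - y‖ := one_mul _
      _ < ε / 3 := by rwa [norm_sub_rev]
  calc ‖y - φI e * y‖ = ‖(y - w) + ((w - φI e * w) + (φI e * w - φI e * y))‖ := by abel_nf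
    _ ≤ ‖y - w‖ + (‖w - φI e * w‖ + ‖φI e * w - φI e * y‖) :=
        (norm_add_le _ _).trans (by gcongr; exact norm_add_le _ _)
    _ < ε / 3 + (ε / 3 + ε / 3) := by gcongr
    _ = ε := by ring

/-- Given a commutative diagram of C*-algebras and *-homomorphisms whose rows are
`0 → I → A → B → 0` and `0 → I' → A' → B' → 0`, where `ι` is injective with closed
two-sided ideal range, `q` is surjective with `q ∘ ι = 0`, the lower row is exact,
the vertical maps are injective, and `φ_I` is non-degenerate, the upper row is exact:
`ι` is injective, `range ι = ker q`, and `q` is surjective. -/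
theorem exact_of_nondegenerate_embedding_into_exact_row
    {I A B I' A' B' : Type*}
    [NonUnitalCStarAlgebra I] [NonUnitalCStarAlgebra A] [NonUnitalCStarAlgebra B]
    [NonUnitalCStarAlgebra I'] [NonUnitalCStarAlgebra A'] [NonUnitalCStarAlgebra B']
    (ι : I →⋆ₙₐ[ℂ] A) (q : A →⋆ₙₐ[ℂ] B)
    (ι' : I' →⋆ₙₐ[ℂ] A') (q' : A' →⋆ₙₐ[ℂ] B')
    (φI : I →⋆ₙₐ[ℂ] I') (φA : A →⋆ₙₐ[ℂ] A') (φB : B →⋆ₙₐ[ℂ] B')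
    -- commutativity of the diagram
    (hcomm₁ : ∀ x : I, φA (ι x) = ι' (φI x))
    (hcomm₂ : ∀ a : A, φB (q a) = q' (φA a))
    -- (i) ι is injective with closed two-sided ideal range, q is surjective, q ∘ ι = 0
    (hι_inj : Function.Injective ι)
    (hι_closed : IsClosed (Set.range ι))
    (hι_ideal : ∀ x ∈ Set.range ι, ∀ a : A,
      a * x ∈ Set.range ι ∧ x * a ∈ Set.range ι)
    (hq_surj : Function.Surjective q)
    (hqι : ∀ x : I, q (ι x) = 0)
    -- (ii) the lower row is exact
    (hι'_inj : Function.Injective ι')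
    (hexact' : Set.range ι' = {a : A' | q' a = 0})
    (hq'_surj : Function.Surjective q')
    -- (iii) the vertical maps are injective
    (hφI_inj : Function.Injective φI)
    (hφA_inj : Function.Injective φA)
    (hφB_inj : Function.Injective φB)
    -- (iv) φ_I is non-degenerate
    (hnondeg : closure (Submodule.span ℂ
      {z : I' | ∃ (x : I) (y : I'), z = φI x * y} : Set I') = Set.univ) :
    -- the upper row is exact
    Function.Injective ι ∧ Set.range ι = {a : A | q a = 0} ∧
      Function.Surjective q := by
  refine ⟨hι_inj, ?_, hq_surj⟩
  refine Set.Subset.antisymm ?_ ?_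
  · rintro _ ⟨x, rfl⟩
    exact hqι x
  · intro a ha
    have ha : q a = 0 := ha
    have h1 : q' (φA a) = 0 := by rw [← hcomm₂ a, ha, map_zero]
    have h2 : φA a ∈ Set.range ι' := by rw [hexact']; exact h1
    obtain ⟨y, hy⟩ := h2
    have hmem : a ∈ closure (Set.range ι) := by
      rw [Metric.mem_closure_iff]
      intro ε hε
      obtain ⟨x, hx1, hx2⟩ := aux_dense φI hφI_inj hnondeg y hε
      refine ⟨ι x * a, (hι_ideal (ι x) ⟨x, rfl⟩ a).2, ?_⟩
      rw [dist_eq_norm]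
      have key : ‖a - ι x * a‖ = ‖y - φI x * y‖ := by
        rw [← NonUnitalStarAlgHom.norm_map φA hφA_inj, map_sub, map_mul, hcomm₁, ← hy,
          ← map_mul, ← map_sub, NonUnitalStarAlgHom.norm_map ι' hι'_inj]
      rw [key]
      exact hx2
    rwa [hι_closed.closure_eq] at hmem
end
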